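/- If H is an SS-quasinormal subgroup of a finite group G, then H is S-semipermutable in G; that is, H permutes with every Sylow p-subgroup P of G for every prime p not dividing |H|. -/

import Mathlib

open scoped Pointwise

section Aux

variable {G : Type*} [Group G]

private lemma coe_mul_singleton' {H : Subgroup G} {h : G} (hh : h ∈ H) :
    (H : Set G) * {h} = H := by
  ext x
  simp only [Set.mul_singleton, Set.mem_image, SetLike.mem_coe]
  constructor
  · rintro ⟨y, hy, rfl⟩; exact H.mul_mem hy hh
  · intro hx; exact ⟨x * h⁻¹, H.mul_mem hx (H.inv_mem hh), by group⟩

private lemma singleton_mul_coe' {H : Subgroup G} {h : G} (hh : h ∈ H) :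
    ({h} : Set G) * H = H := by
  ext x
  simp only [Set.singleton_mul, Set.mem_image, SetLike.mem_coe]
  constructor
  · rintro ⟨y, hy, rfl⟩; exact H.mul_mem hh hy
  · intro hx; exact ⟨h⁻¹ * x, H.mul_mem (H.inv_mem hh) hx, by group⟩

private lemma conj_smul_set' (h : G) (s : Set G) :
    (MulAut.conj h • s : Set G) = {h} * s * {h⁻¹} := by
  ext x
  simp only [Set.mem_smul_set, Set.singleton_mul, Set.mul_singleton, Set.mem_image,
    MulAut.conj_apply, exists_exists_and_eq_and]
  rfl

private lemma map_conj_smul' (B : Subgroup G) (b₀ : B) (Q : Subgroup B) :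
    ((MulAut.conj b₀ • Q).map B.subtype) = MulAut.conj (b₀ : G) • (Q.map B.subtype) := by
  ext x
  simp only [Subgroup.mem_map, Subgroup.mem_smul_pointwise_iff_exists, Subgroup.coe_subtype,
    MulAut.smul_def, MulAut.conj_apply]
  constructor
  · rintro ⟨y, ⟨z, hz, rfl⟩, rfl⟩
    exact ⟨z, ⟨z, hz, rfl⟩, by simp⟩
  · rintro ⟨y, ⟨z, hz, rfl⟩, rfl⟩
    exact ⟨_, ⟨z, hz, rfl⟩, by simp⟩

private lemma index_dvd_of_mul_eq_univ' [Finite G] (H B : Subgroup G)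
    (h : (H : Set G) * (B : Set G) = Set.univ) : B.index ∣ Nat.card H := by
  classical
  let f : H ⧸ B.subgroupOf H → G ⧸ B :=
    Quotient.map' Subtype.val (fun a b hab => by
      rw [QuotientGroup.leftRel_apply] at hab ⊢
      simpa [Subgroup.mem_subgroupOf] using hab)
  have hinj : Function.Injective f := by
    refine Quotient.ind₂' fun a b hab => ?_
    have : ((a : G) : G ⧸ B) = ((b : G) : G ⧸ B) := hab
    rw [QuotientGroup.eq] at this
    exact Quotient.sound' (QuotientGroup.leftRel_apply.mpr (by
      simpa [Subgroup.mem_subgroupOf] using this))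
  have hsurj : Function.Surjective f := by
    refine Quotient.ind' fun g => ?_
    have : g ∈ (H : Set G) * (B : Set G) := by rw [h]; trivial
    obtain ⟨a, ha, b, hb, rfl⟩ := this
    refine ⟨QuotientGroup.mk ⟨a, ha⟩, ?_⟩
    show ((a : G) : G ⧸ B) = ((a * b : G) : G ⧸ B)
    rw [QuotientGroup.eq]
    simpa using hb
  have hcard : B.index = Nat.card (H ⧸ B.subgroupOf H) := by
    rw [Subgroup.index_eq_card]
    exact (Nat.card_eq_of_bijective f ⟨hinj, hsurj⟩).symm
  rw [hcard]
  exact Subgroup.card_quotient_dvd_card _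

end Aux

/-- `H` is S-quasinormal in `G` if it permutes with every Sylow subgroup of `G`. -/
def SQuasinormal (G : Type*) [Group G] (H : Subgroup G) : Prop :=
  ∀ (p : ℕ), p.Prime → ∀ P : Sylow p G,
    (H : Set G) * ((P : Subgroup G) : Set G) = ((P : Subgroup G) : Set G) * (H : Set G)

/-- `H` is SS-quasinormal in `G` if it has a supplement `B` (`G = HB`) such that `H`
permutes with every Sylow subgroup of `B`. -/
def SSQuasinormal (G : Type*) [Group G] (H : Subgroup G) : Prop :=
  ∃ B : Subgroup G, (H : Set G) * (B : Set G) = Set.univ ∧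
    ∀ (q : ℕ), q.Prime → ∀ Q : Sylow q B,
      (H : Set G) * ((((Q : Subgroup B).map B.subtype) : Subgroup G) : Set G) =
        ((((Q : Subgroup B).map B.subtype) : Subgroup G) : Set G) * (H : Set G)

/-- Every SS-quasinormal subgroup of a finite group is S-semipermutable. -/
theorem ssQuasinormal_isSSemipermutable {G : Type*} [Group G] [Finite G]
    (H : Subgroup G) (hH : SSQuasinormal G H) :
    ∀ (p : ℕ), p.Prime → ¬ p ∣ Nat.card H → ∀ P : Sylow p G,
      (H : Set G) * ((P : Subgroup G) : Set G) = ((P : Subgroup G) : Set G) * (H : Set G) := by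
  intro p hp hpH P
  have hp' : Fact p.Prime := ⟨hp⟩
  obtain ⟨B, hB1, hB2⟩ := hH
  have hidx : B.index ∣ Nat.card H := index_dvd_of_mul_eq_univ' H B hB1
  have hpidx : ¬ p ∣ B.index := fun hd => hpH (hd.trans hidx)
  obtain ⟨Q⟩ : Nonempty (Sylow p B) := inferInstance
  set S : Subgroup G := (Q : Subgroup B).map B.subtype with hSdef
  have hG0 : Nat.card G ≠ 0 := Nat.card_pos.ne'
  have hB0 : Nat.card B ≠ 0 := Nat.card_pos.ne'
  have hcardS : Nat.card S = p ^ (Nat.card G).factorization p := by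
    have h1 : Nat.card S = Nat.card Q :=
      (Nat.card_congr ((Q : Subgroup B).equivMapOfInjective B.subtype
        B.subtype_injective).toEquiv).symm
    rw [h1, Sylow.card_eq_multiplicity]
    congr 1
    have hBG : Nat.card B ∣ Nat.card G := Subgroup.card_subgroup_dvd_card B
    apply le_antisymm
    · exact (hp.pow_dvd_iff_le_factorization hG0).mp
        ((Nat.ordProj_dvd (Nat.card B) p).trans hBG)
    · have h2 : p ^ (Nat.card G).factorization p ∣ Nat.card B * B.index := by
        rw [Subgroup.card_mul_index]; exact Nat.ordProj_dvd _ p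
      exact (hp.pow_dvd_iff_le_factorization hB0).mp
        ((Nat.Coprime.pow_left _ ((hp.coprime_iff_not_dvd).mpr hpidx)).dvd_of_dvd_mul_right h2)
  obtain ⟨R, hSR⟩ := (Q.isPGroup'.map B.subtype).exists_le_sylow
  have hSR' : S = R := Subgroup.eq_of_le_of_card_ge hSR
    (by rw [hcardS, Sylow.card_eq_multiplicity])
  obtain ⟨g, hg⟩ := MulAction.exists_smul_eq G R P
  have hPval : (P : Subgroup G) = MulAut.conj g • S := by
    rw [hSR', ← hg]; rfl
  have hgmem : g ∈ (H : Set G) * (B : Set G) := by rw [hB1]; trivial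
  obtain ⟨h, hh, b, hb, rfl⟩ := hgmem
  set b₀ : B := ⟨b, hb⟩ with hb₀
  set T : Subgroup G := ((b₀ • Q : Sylow p B) : Subgroup B).map B.subtype with hTdef
  have hHT : (H : Set G) * T = (T : Set G) * H := hB2 p hp (b₀ • Q)
  have hTS : T = MulAut.conj b • S := by
    rw [hTdef, hSdef]
    rw [show ((b₀ • Q : Sylow p B) : Subgroup B) = MulAut.conj b₀ • (Q : Subgroup B) from rfl]
    exact map_conj_smul' B b₀ _
  have hPT : (P : Subgroup G) = MulAut.conj h • T := by
    rw [hTS, hPval, ← mul_smul, ← map_mul]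
  have hPset : ((P : Subgroup G) : Set G) = {h} * (T : Set G) * {h⁻¹} := by
    rw [hPT, Subgroup.coe_pointwise_smul, conj_smul_set']
  have e1 : (H : Set G) * {h} = H := coe_mul_singleton' hh
  have e2 : (H : Set G) * {h⁻¹} = H := coe_mul_singleton' (H.inv_mem hh)
  have e3 : ({h} : Set G) * H = H := singleton_mul_coe' hh
  have e4 : ({h⁻¹} : Set G) * H = H := singleton_mul_coe' (H.inv_mem hh)
  calc (H : Set G) * ((P : Subgroup G) : Set G) = (H : Set G) * ({h} * (T : Set G) * {h⁻¹}) := by rw [hPset]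
    _ = ((H : Set G) * {h}) * (T : Set G) * {h⁻¹} := by simp only [mul_assoc]
    _ = ((H : Set G) * (T : Set G)) * {h⁻¹} := by rw [e1]
    _ = ((T : Set G) * (H : Set G)) * {h⁻¹} := by rw [hHT]
    _ = (T : Set G) * ((H : Set G) * {h⁻¹}) := by rw [mul_assoc]
    _ = (T : Set G) * H := by rw [e2]
    _ = (H : Set G) * T := by rw [hHT]
    _ = ({h} * (H : Set G)) * T := by rw [e3]
    _ = {h} * ((H : Set G) * (T : Set G)) := by rw [mul_assoc]
    _ = {h} * ((T : Set G) * ({h⁻¹} * (H : Set G))) := by rw [e4, hHT]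
    _ = ({h} * (T : Set G) * {h⁻¹}) * (H : Set G) := by simp only [mul_assoc]
    _ = ((P : Subgroup G) : Set G) * H := by rw [hPset]
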